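/- Let G be a very well-covered graph (on an even number n of vertices, with no isolated vertices, in which every maximal independent set has cardinality n/2) and k ≥ 1. Then the graph G_k (on nk vertices, with edges {x_{i,p},x_{j,q}} iff {x_i,x_j} ∈ E(G) and p+q ≤ k+1) is very well-covered, i.e., every maximal independent set of G_k has size nk/2. -/

import Mathlib

/-- The graph `G_k`. -/
def graphPower {V : Type*} (G : SimpleGraph V) (k : ℕ) : SimpleGraph (V × Fin k) where
  Adj a b := G.Adj a.1 b.1 ∧ a.2.val + b.2.val + 2 ≤ k + 1
  symm := ⟨by rintro a b ⟨h1, h2⟩; exact ⟨h1.symm, by omega⟩⟩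
  loopless := ⟨by rintro a ⟨h1, _⟩; exact G.irrefl h1⟩

/-- `A` is an independent set of `G`. -/
def IsIndep {V : Type*} (G : SimpleGraph V) (A : Set V) : Prop :=
  ∀ u ∈ A, ∀ v ∈ A, ¬ G.Adj u v

/-- `A` is a maximal independent set of `G`. -/
def IsMaxIndep {V : Type*} (G : SimpleGraph V) (A : Set V) : Prop :=
  IsIndep G A ∧ ∀ B : Set V, IsIndep G B → A ⊆ B → B = A

open scoped Classical

set_option linter.unusedSectionVars false
set_option linter.unusedVariables false
set_option linter.unnecessarySimpa false

section Basics

variable {W : Type*} (H : SimpleGraph W)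

lemma isIndep_mono {A B : Set W} (h : IsIndep H B) (hAB : A ⊆ B) : IsIndep H A :=
  fun u hu v hv => h u (hAB hu) v (hAB hv)

lemma mem_of_maxIndep {A : Set W} (hA : IsMaxIndep H A) (x : W)
    (hx : ∀ b ∈ A, ¬ H.Adj x b) : x ∈ A := by
  have hind : IsIndep H (insert x A) := by
    intro u hu v hv
    rcases Set.mem_insert_iff.1 hu with h1 | h1 <;>
      rcases Set.mem_insert_iff.1 hv with h2 | h2
    · subst h1; subst h2; exact H.irrefl
    · subst h1; exact hx v h2
    · subst h2; exact fun h => hx u h1 h.symm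
    · exact hA.1 u h1 v h2
  have := hA.2 (insert x A) hind (Set.subset_insert x A)
  rw [← this]; exact Set.mem_insert x A

lemma not_indep_of_not_mem_max {A : Set W} (hA : IsMaxIndep H A) {x : W}
    (hx : x ∉ A) : ∃ b ∈ A, H.Adj x b := by
  by_contra h
  push_neg at h
  exact hx (mem_of_maxIndep H hA x h)

variable [Fintype W]

lemma exists_maxIndep_superset_aux :
    ∀ (m : ℕ) (I : Set W), IsIndep H I → Fintype.card W - I.ncard ≤ m →
      ∃ S, IsMaxIndep H S ∧ I ⊆ S := by
  intro m
  induction m with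
  | zero =>
    intro I hI hm
    refine ⟨I, ⟨hI, ?_⟩, subset_rfl⟩
    intro B hB hIB
    by_contra hne
    have hss : I ⊂ B := Ne.ssubset_of_subset (fun h => hne h.symm) hIB
    have h1 : I.ncard < B.ncard := Set.ncard_lt_ncard hss (Set.toFinite B)
    have h2 : B.ncard ≤ Fintype.card W := by
      have := Set.ncard_le_ncard (Set.subset_univ B) (Set.toFinite _)
      simpa [Set.ncard_univ, Nat.card_eq_fintype_card] using this
    omega
  | succ m ih =>
    intro I hI hm
    by_cases hmax : ∀ B : Set W, IsIndep H B → I ⊆ B → B = I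
    · exact ⟨I, ⟨hI, hmax⟩, subset_rfl⟩
    · push_neg at hmax
      obtain ⟨B, hB, hIB, hne⟩ := hmax
      have hss : I ⊂ B := Ne.ssubset_of_subset (fun h => hne h.symm) hIB
      have h1 : I.ncard < B.ncard := Set.ncard_lt_ncard hss (Set.toFinite B)
      obtain ⟨S, hS, hBS⟩ := ih B hB (by omega)
      exact ⟨S, hS, hIB.trans hBS⟩

lemma exists_maxIndep_superset {I : Set W} (hI : IsIndep H I) :
    ∃ S, IsMaxIndep H S ∧ I ⊆ S :=
  exists_maxIndep_superset_aux H (Fintype.card W) I hI (by omega)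

end Basics


section Hall
variable {V : Type*} [Fintype V] (G : SimpleGraph V)

/-- neighborhood of a set -/
def NN (X : Set V) : Set V := {v | ∃ x ∈ X, G.Adj x v}

variable {c : ℕ}

lemma indep_ncard_le (hwc : ∀ A : Set V, IsMaxIndep G A → A.ncard = c)
    {I : Set V} (hI : IsIndep G I) : I.ncard ≤ c := by
  obtain ⟨S, hS, hIS⟩ := exists_maxIndep_superset G hI
  calc I.ncard ≤ S.ncard := Set.ncard_le_ncard hIS (Set.toFinite S)
    _ = c := hwc S hS

lemma hallS (hwc : ∀ A : Set V, IsMaxIndep G A → A.ncard = c) :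
    ∀ (t : ℕ) (Y Wt : Set V), IsIndep G (Y ∪ Wt) →
      (∀ y ∈ Y, ({v | G.Adj y v} \ NN G Wt).Nonempty) → Y.ncard ≤ t →
      Y.ncard ≤ (NN G Y \ NN G Wt).ncard := by
  intro t
  induction t with
  | zero => intro Y Wt _ _ h; omega
  | succ t ih =>
    intro Y Wt hind hYnb hYt
    by_contra hlt'
    push_neg at hlt'
    have hlt : (NN G Y \ NN G Wt).ncard < Y.ncard := hlt'
    have hYne : Y.Nonempty := by
      rw [← Set.ncard_pos (Set.toFinite Y)]; omega
    -- pick y0 with inclusion-minimal f y0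
    obtain ⟨y0, hy0Y, hy0min⟩ : ∃ y0 ∈ Y, ∀ y ∈ Y,
        ({v | G.Adj y v} \ NN G Wt) ≤ ({v | G.Adj y0 v} \ NN G Wt) →
        ({v | G.Adj y0 v} \ NN G Wt) = ({v | G.Adj y v} \ NN G Wt) := by
      obtain ⟨y0, hy0Y, h⟩ := Set.Finite.exists_minimalFor
        (fun y => {v | G.Adj y v} \ NN G Wt) Y (Set.toFinite Y) hYne
      exact ⟨y0, hy0Y, fun y hy hle => le_antisymm (h hy hle) hle⟩
    set Z0 : Set V := {v | G.Adj y0 v} \ NN G Wt with hZ0def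
    have hZ0ne : Z0.Nonempty := hYnb y0 hy0Y
    set C : Set V := {y ∈ Y | ({v | G.Adj y v} \ NN G Wt) ⊆ Z0} with hCdef
    have hCY : C ⊆ Y := fun y hy => hy.1
    have hy0C : y0 ∈ C := ⟨hy0Y, subset_rfl⟩
    have hCeq : ∀ y ∈ C, ({v | G.Adj y v} \ NN G Wt) = Z0 := by
      intro y hy
      exact (hy0min y hy.1 hy.2).symm
    have hCnbr : ∀ y ∈ C, {v | G.Adj y v} ⊆ Z0 ∪ NN G Wt := by
      intro y hy v hv
      by_cases hvW : v ∈ NN G Wt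
      · exact Or.inr hvW
      · exact Or.inl ((hCeq y hy) ▸ ⟨hv, hvW⟩)
    by_cases hC : Z0.ncard < C.ncard
    · -- Case A : contradiction via too-large independent set
      obtain ⟨z0, hz0⟩ := hZ0ne
      have hz0nW : z0 ∉ NN G Wt := hz0.2
      have hWind : IsIndep G Wt := isIndep_mono G hind Set.subset_union_right
      have hins : IsIndep G (insert z0 Wt) := by
        intro u hu v hv
        rcases Set.mem_insert_iff.1 hu with h1 | h1 <;>
          rcases Set.mem_insert_iff.1 hv with h2 | h2
        · subst h1; subst h2; exact G.irrefl
        · subst h1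
          exact fun h => hz0nW ⟨v, h2, h.symm⟩
        · subst h2
          exact fun h => hz0nW ⟨u, h1, h⟩
        · exact hWind u h1 v h2
      obtain ⟨U1, hU1max, hU1sup⟩ := exists_maxIndep_superset G hins
      have hU1card : U1.ncard = c := hwc U1 hU1max
      have hz0U1 : z0 ∈ U1 := hU1sup (Set.mem_insert _ _)
      have hWU1 : Wt ⊆ U1 := (Set.subset_insert _ _).trans hU1sup
      have hU1NW : ∀ a ∈ U1, a ∉ NN G Wt := by
        rintro a ha ⟨w, hw, hadj⟩
        exact hU1max.1 w (hWU1 hw) a ha hadj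
      have hCU1 : ∀ y ∈ C, y ∉ U1 := by
        intro y hy hyU1
        have hadj : G.Adj y z0 := by
          have := (hCeq y hy).symm ▸ hz0
          exact this.1
        exact hU1max.1 y hyU1 z0 hz0U1 hadj
      set U2 : Set V := (U1 \ Z0) ∪ C with hU2def
      have hU2ind : IsIndep G U2 := by
        have key : ∀ u ∈ U1 \ Z0, ∀ y ∈ C, ¬ G.Adj u y := by
          intro u hu y hy hadj
          have : u ∈ Z0 ∪ NN G Wt := hCnbr y hy hadj.symm
          rcases this with h | h
          · exact hu.2 h
          · exact hU1NW u hu.1 h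
        intro u hu v hv
        rcases hu with hu | hu <;> rcases hv with hv | hv
        · exact hU1max.1 u hu.1 v hv.1
        · exact key u hu v hv
        · exact fun h => key v hv u hu h.symm
        · exact isIndep_mono G hind Set.subset_union_left u (hCY hu) v (hCY hv)
      have hU2le : U2.ncard ≤ c := indep_ncard_le G hwc hU2ind
      have hdisj : Disjoint (U1 \ Z0) C := by
        rw [Set.disjoint_right]
        intro y hy
        exact fun hyU => hCU1 y hy hyU.1
      have hU2card : U2.ncard = (U1 \ Z0).ncard + C.ncard :=
        Set.ncard_union_eq hdisj (Set.toFinite _) (Set.toFinite _)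
      have hU1le : U1.ncard ≤ (U1 \ Z0).ncard + Z0.ncard := by
        calc U1.ncard ≤ ((U1 \ Z0) ∪ Z0).ncard :=
              Set.ncard_le_ncard (fun a ha => by
                by_cases h : a ∈ Z0
                · exact Or.inr h
                · exact Or.inl ⟨ha, h⟩) (Set.toFinite _)
          _ ≤ (U1 \ Z0).ncard + Z0.ncard := Set.ncard_union_le _ _
      omega
    · -- Case B : recurse with W' := insert y0 Wt
      push_neg at hC
      set Y' : Set V := Y \ C with hY'def
      set W' : Set V := insert y0 Wt with hW'def
      have hNW' : NN G W' = {v | G.Adj y0 v} ∪ NN G Wt := by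
        ext v
        constructor
        · rintro ⟨x, hx, hadj⟩
          rcases Set.mem_insert_iff.1 hx with h | h
          · exact Or.inl (h ▸ hadj)
          · exact Or.inr ⟨x, h, hadj⟩
        · rintro (h | ⟨x, hx, hadj⟩)
          · exact ⟨y0, Set.mem_insert _ _, h⟩
          · exact ⟨x, Set.mem_insert_of_mem _ hx, hadj⟩
      have hind' : IsIndep G (Y' ∪ W') := by
        apply isIndep_mono G hind
        intro v hv
        rcases hv with hv | hv
        · exact Or.inl hv.1
        · rcases Set.mem_insert_iff.1 hv with h | h
          · exact Or.inl (h ▸ hy0Y)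
          · exact Or.inr h
      have hYnb' : ∀ y ∈ Y', ({v | G.Adj y v} \ NN G W').Nonempty := by
        intro y hy
        by_contra hempty
        rw [Set.not_nonempty_iff_eq_empty, Set.diff_eq_empty] at hempty
        have : ({v | G.Adj y v} \ NN G Wt) ⊆ Z0 := by
          intro v hv
          have := hempty hv.1
          rw [hNW'] at this
          rcases this with h | h
          · exact ⟨h, hv.2⟩
          · exact absurd h hv.2
        exact hy.2 ⟨hy.1, this⟩
      have hCpos : 1 ≤ C.ncard := (Set.ncard_pos (Set.toFinite C)).2 ⟨y0, hy0C⟩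
      have hCcard : C.ncard ≤ Y.ncard := Set.ncard_le_ncard hCY (Set.toFinite Y)
      have hY'card : Y'.ncard = Y.ncard - C.ncard := Set.ncard_diff hCY (Set.toFinite C)
      have hY't : Y'.ncard ≤ t := by omega
      have hih := ih Y' W' hind' hYnb' hY't
      have hsub : NN G Y' \ NN G W' ⊆ (NN G Y \ NN G Wt) \ Z0 := by
        rintro v ⟨⟨y, hy, hadj⟩, hvW'⟩
        rw [hNW'] at hvW'
        refine ⟨⟨⟨y, hy.1, hadj⟩, fun h => hvW' (Or.inr h)⟩, fun h => hvW' (Or.inl h.1)⟩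
      have hZ0sub : Z0 ⊆ NN G Y \ NN G Wt := by
        intro z hz
        exact ⟨⟨y0, hy0Y, hz.1⟩, hz.2⟩
      have h1 : Y'.ncard ≤ ((NN G Y \ NN G Wt) \ Z0).ncard :=
        hih.trans (Set.ncard_le_ncard hsub (Set.toFinite _))
      have h2 : ((NN G Y \ NN G Wt) \ Z0).ncard = (NN G Y \ NN G Wt).ncard - Z0.ncard :=
        Set.ncard_diff hZ0sub (Set.toFinite _)
      have h3 : Z0.ncard ≤ (NN G Y \ NN G Wt).ncard :=
        Set.ncard_le_ncard hZ0sub (Set.toFinite _)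
      have hZ0pos : 1 ≤ Z0.ncard := by
        obtain ⟨z, hz⟩ := hZ0ne
        exact (Set.ncard_pos (Set.toFinite Z0)).2 ⟨z, hz⟩
      omega
end Hall


section PM
variable {V : Type*} [Fintype V] (G : SimpleGraph V)

lemma exists_pm (heven : Even (Fintype.card V))
    (hiso : ∀ v : V, ∃ u, G.Adj v u)
    (hwc : ∀ A : Set V, IsMaxIndep G A → A.ncard = Fintype.card V / 2) :
    ∃ m : V → V, (∀ v, G.Adj v (m v)) ∧ (∀ v, m (m v) = v) ∧
      (∀ T, IsMaxIndep G T → ∀ v, (v ∈ T ↔ m v ∉ T)) := by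
  set n := Fintype.card V with hn
  -- a maximal independent set S
  obtain ⟨S, hSmax, -⟩ := exists_maxIndep_superset G
    (I := (∅ : Set V)) (fun u hu => absurd hu (Set.notMem_empty u))
  have hScard : S.ncard = n / 2 := hwc S hSmax
  have hSc : Sᶜ.ncard = n / 2 := by
    have h := Set.ncard_add_ncard_compl S
    rw [Nat.card_eq_fintype_card] at h
    obtain ⟨r, hr⟩ := heven
    omega
  -- Hall condition
  have hNNempty : NN G (∅ : Set V) = ∅ := by
    ext v; simp [NN]
  set t : ↥S → Finset V := fun y => (G.neighborSet y.1).toFinite.toFinset with ht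
  have hall : ∀ s : Finset ↥S, s.card ≤ (s.biUnion t).card := by
    intro s
    set Y : Set V := Subtype.val '' (↑s : Set ↥S) with hY
    have hYS : Y ⊆ S := by rintro v ⟨y, _, rfl⟩; exact y.2
    have h1 : IsIndep G (Y ∪ ∅) := by
      rw [Set.union_empty]
      exact isIndep_mono G hSmax.1 hYS
    have h2 : ∀ y ∈ Y, ({v | G.Adj y v} \ NN G (∅ : Set V)).Nonempty := by
      intro y _
      rw [hNNempty, Set.diff_empty]
      exact hiso y
    have h3 := hallS G hwc Y.ncard Y ∅ h1 h2 le_rfl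
    rw [hNNempty, Set.diff_empty] at h3
    have hYcard : Y.ncard = s.card := by
      rw [hY, Set.ncard_image_of_injective _ Subtype.val_injective, Set.ncard_coe_finset]
    have hNNY : NN G Y = ↑(s.biUnion t) := by
      ext v
      simp only [NN, Set.mem_setOf_eq, Finset.coe_biUnion, Set.mem_iUnion,
        Finset.mem_coe, Set.Finite.coe_toFinset, ht]
      constructor
      · rintro ⟨x, ⟨y, hy, rfl⟩, hadj⟩
        exact ⟨y, hy, by simpa [Set.Finite.mem_toFinset] using hadj⟩
      · rintro ⟨y, hy, hv⟩
        exact ⟨y.1, ⟨y, hy, rfl⟩, by simpa [Set.Finite.mem_toFinset] using hv⟩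
    rw [hYcard, hNNY, Set.ncard_coe_finset] at h3
    exact h3
  obtain ⟨f, hfinj, hfmem⟩ := (Finset.all_card_le_biUnion_card_iff_exists_injective t).1 hall
  have hfadj : ∀ y : ↥S, G.Adj y.1 (f y) := by
    intro y
    have := hfmem y
    rw [ht, Set.Finite.mem_toFinset] at this
    exact this
  have hfS : ∀ y : ↥S, f y ∈ Sᶜ := by
    intro y
    intro hfy
    exact hSmax.1 y.1 y.2 (f y) hfy (hfadj y)
  set g : ↥S → ↥(Sᶜ) := fun y => ⟨f y, hfS y⟩ with hg
  have hginj : Function.Injective g := by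
    intro a b hab
    exact hfinj (congrArg Subtype.val hab)
  have hcards : Fintype.card ↥S = Fintype.card ↥(Sᶜ) := by
    have h1 : S.ncard = Fintype.card ↥S := by
      rw [Set.ncard_eq_toFinset_card', Set.toFinset_card]
    have h2 : Sᶜ.ncard = Fintype.card ↥(Sᶜ) := by
      rw [Set.ncard_eq_toFinset_card', Set.toFinset_card]
    omega
  have hgbij : Function.Bijective g :=
    (Fintype.bijective_iff_injective_and_card g).2 ⟨hginj, hcards⟩
  set e : ↥S ≃ ↥(Sᶜ) := Equiv.ofBijective g hgbij with he
  have heval : ∀ y : ↥S, (e y : V) = f y := fun y => rfl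
  set m : V → V := fun v =>
    if h : v ∈ S then (e ⟨v, h⟩ : V) else (e.symm ⟨v, h⟩ : V) with hm
  have hmS : ∀ v (h : v ∈ S), m v = (e ⟨v, h⟩ : V) := by
    intro v h; rw [hm]; simp [h]
  have hmS' : ∀ v (h : v ∉ S), m v = (e.symm ⟨v, h⟩ : V) := by
    intro v h; rw [hm]; simp [h]
  have hmem1 : ∀ v (h : v ∈ S), m v ∉ S := by
    intro v h
    rw [hmS v h]
    exact (e ⟨v, h⟩).2
  have hmem2 : ∀ v (h : v ∉ S), m v ∈ S := by
    intro v h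
    rw [hmS' v h]
    exact (e.symm ⟨v, h⟩).2
  have hadj : ∀ v, G.Adj v (m v) := by
    intro v
    by_cases h : v ∈ S
    · rw [hmS v h, heval ⟨v, h⟩]
      exact hfadj ⟨v, h⟩
    · rw [hmS' v h]
      set x : ↥S := e.symm ⟨v, h⟩ with hx
      have h1 : (e x : V) = v := by
        rw [hx, e.apply_symm_apply]
      have h2 : G.Adj x.1 (f x) := hfadj x
      rw [← heval x, h1] at h2
      exact h2.symm
  have hinvol : ∀ v, m (m v) = v := by
    intro v
    by_cases h : v ∈ S
    · have h1 : m v ∉ S := hmem1 v h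
      rw [hmS' (m v) h1]
      have h2 : (⟨m v, h1⟩ : ↥(Sᶜ)) = e ⟨v, h⟩ := Subtype.ext (hmS v h)
      rw [h2, e.symm_apply_apply]
    · have h1 : m v ∈ S := hmem2 v h
      rw [hmS (m v) h1]
      have h2 : (⟨m v, h1⟩ : ↥S) = e.symm ⟨v, h⟩ := Subtype.ext (hmS' v h)
      rw [h2, e.apply_symm_apply]
  refine ⟨m, hadj, hinvol, ?_⟩
  -- key property
  intro T hTmax v
  have hTcard : T.ncard = n / 2 := hwc T hTmax
  constructor
  · intro hvT hmvT
    exact hTmax.1 v hvT (m v) hmvT (hadj v)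
  · intro hmvT
    by_contra hvT
    -- counting contradiction
    set φ : V → V := fun u => if u ∈ S then u else m u with hφ
    have hφS : ∀ u : V, φ u ∈ S.toFinset := by
      intro u
      rw [Set.mem_toFinset, hφ]
      by_cases h : u ∈ S
      · simpa [h]
      · simp only [h, if_false]
        exact hmem2 u h
    have hfib : ∀ u y : V, φ u = y → u = y ∨ u = m y := by
      intro u y huy
      rw [hφ] at huy
      by_cases h : u ∈ S
      · left; simpa [h] using huy
      · right
        simp only [h, if_false] at huy
        rw [← huy, hinvol]
    have hcard_eq : T.toFinset.card =
        ∑ y ∈ S.toFinset, (T.toFinset.filter (fun u => φ u = y)).card :=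
      Finset.card_eq_sum_card_fiberwise (fun x _ => hφS x)
    have hle1 : ∀ y ∈ S.toFinset, (T.toFinset.filter (fun u => φ u = y)).card ≤ 1 := by
      intro y _
      rw [Finset.card_le_one]
      intro a ha b hb
      rw [Finset.mem_filter, Set.mem_toFinset] at ha hb
      rcases hfib a y ha.2 with h1 | h1 <;> rcases hfib b y hb.2 with h2 | h2
      · rw [h1, h2]
      · exfalso
        apply hTmax.1 a (ha.1) b (hb.1)
        rw [h1, h2]
        exact hadj y
      · exfalso
        apply hTmax.1 b (hb.1) a (ha.1)
        rw [h1, h2]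
        exact hadj y
      · rw [h1, h2]
    have hy0 : (T.toFinset.filter (fun u => φ u = φ v)).card = 0 := by
      rw [Finset.card_eq_zero, Finset.filter_eq_empty_iff]
      intro u hu
      rw [Set.mem_toFinset] at hu
      intro huv
      rcases hfib u (φ v) huv with h1 | h1
      · -- u = φ v ∈ {v, m v}
        by_cases h : v ∈ S
        · rw [hφ] at h1; simp only [h, if_true] at h1
          exact hvT (h1 ▸ hu)
        · rw [hφ] at h1; simp only [h, if_false] at h1
          exact hmvT (h1 ▸ hu)
      · by_cases h : v ∈ S
        · rw [hφ] at h1; simp only [h, if_true] at h1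
          exact hmvT (h1 ▸ hu)
        · rw [hφ] at h1; simp only [h, if_false] at h1
          rw [hinvol] at h1
          exact hvT (h1 ▸ hu)
    have hstrict : ∑ y ∈ S.toFinset, (T.toFinset.filter (fun u => φ u = y)).card
        < S.toFinset.card := by
      have : ∑ y ∈ S.toFinset, (T.toFinset.filter (fun u => φ u = y)).card
          < ∑ y ∈ S.toFinset, 1 := by
        apply Finset.sum_lt_sum hle1
        exact ⟨φ v, hφS v, by rw [hy0]; omega⟩
      simpa using this
    have hTS : T.toFinset.card = S.toFinset.card := by
      have h1 : T.ncard = T.toFinset.card := Set.ncard_eq_toFinset_card' T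
      have h2 : S.ncard = S.toFinset.card := Set.ncard_eq_toFinset_card' S
      omega
    omega
end PM


section Main
variable {V : Type*} [Fintype V] {G : SimpleGraph V} {k : ℕ}
  {B : Set (V × Fin k)}

/-- the layer sets -/
def layer (B : Set (V × Fin k)) (p : Fin k) : Set V := {v | (v, p) ∈ B}

variable (hB : IsMaxIndep (graphPower G k) B)

lemma layer_mono (hB : IsMaxIndep (graphPower G k) B) {p q : Fin k} (hpq : p.val ≤ q.val) :
    layer B p ⊆ layer B q := by
  intro v hv
  have : (v, q) ∈ B := by
    apply mem_of_maxIndep _ hB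
    rintro ⟨u, r⟩ hb hadj
    obtain ⟨h1, h2⟩ := hadj
    have h2' : q.val + r.val + 2 ≤ k + 1 := h2
    exact hB.1 (v, p) hv (u, r) hb ⟨h1, show p.val + r.val + 2 ≤ k + 1 by omega⟩
  exact this

lemma layer_indep (hB : IsMaxIndep (graphPower G k) B) {p q : Fin k}
    (h : p.val + q.val + 2 ≤ k + 1) :
    ∀ u ∈ layer B p, ∀ w ∈ layer B q, ¬ G.Adj u w := by
  intro u hu w hw hadj
  exact hB.1 (u, p) hu (w, q) hw ⟨hadj, h⟩

lemma layer_dom (hB : IsMaxIndep (graphPower G k) B) {p r : Fin k}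
    (hpr : p.val + r.val + 2 = k + 1) {v : V} (hv : v ∉ layer B p) :
    ∃ u, G.Adj v u ∧ u ∈ layer B r := by
  obtain ⟨⟨u, s⟩, hbB, hadj⟩ := not_indep_of_not_mem_max _ hB hv
  obtain ⟨h1, h2⟩ := hadj
  have h2' : p.val + s.val + 2 ≤ k + 1 := h2
  have : u ∈ layer B s := hbB
  exact ⟨u, h1, layer_mono hB (by omega) this⟩

lemma layer_sand (hB : IsMaxIndep (graphPower G k) B) {p q : Fin k}
    (hpq : p.val + q.val + 2 = k + 1) {T : Set V} (hT : IsMaxIndep G T)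
    (hTp : layer B p ⊆ T) : T ⊆ layer B q := by
  intro x hx
  by_contra hxq
  obtain ⟨u, hadj, hu⟩ := layer_dom hB (by omega : q.val + p.val + 2 = k + 1) hxq
  exact hT.1 x hx u (hTp hu) hadj

lemma layer_self_indep (hB : IsMaxIndep (graphPower G k) B) {p : Fin k}
    (h : 2 * p.val + 2 ≤ k + 1) : IsIndep G (layer B p) :=
  fun u hu w hw => layer_indep hB (by omega) u hu w hw

lemma oneSide (hB : IsMaxIndep (graphPower G k) B) {x y : V} (hadj : G.Adj x y)
    (hprop : ∀ T', IsMaxIndep G T' → (x ∈ T' ↔ y ∉ T'))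
    {p q : Fin k} (hpq : p.val + q.val + 2 = k + 1) (hple : p.val ≤ q.val)
    {T : Set V} (hT : IsMaxIndep G T) (hTp : layer B p ⊆ T) (hTq : T ⊆ layer B q)
    (hx : x ∈ T) :
    x ∈ layer B q ∧ y ∉ layer B p ∧ (x ∈ layer B p ∨ y ∈ layer B q) := by
  refine ⟨hTq hx, fun h => hT.1 x hx y (hTp h) hadj, ?_⟩
  by_contra hor
  push_neg at hor
  obtain ⟨hxp, hyq⟩ := hor
  obtain ⟨u, hxu, huq⟩ := layer_dom hB hpq hxp
  have hI : IsIndep G (insert u (layer B p)) := by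
    intro a ha b hb
    rcases Set.mem_insert_iff.1 ha with h1 | h1 <;>
      rcases Set.mem_insert_iff.1 hb with h2 | h2
    · subst h1; subst h2; exact G.irrefl
    · subst h1
      exact fun h => layer_indep hB (by omega : q.val + p.val + 2 ≤ k + 1) a huq b h2 h
    · subst h2
      exact fun h => layer_indep hB (by omega : q.val + p.val + 2 ≤ k + 1) b huq a h1 h.symm
    · exact layer_indep hB (by omega) a h1 b h2
  obtain ⟨T', hT', hIT'⟩ := exists_maxIndep_superset G hI
  have hT'q : T' ⊆ layer B q :=
    layer_sand hB hpq hT' ((Set.subset_insert _ _).trans hIT')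
  have hxT' : x ∉ T' := fun hxT' =>
    hT'.1 x hxT' u (hIT' (Set.mem_insert _ _)) hxu
  have hyT' : y ∈ T' := by
    by_contra hyT'
    exact hxT' ((hprop T' hT').2 hyT')
  exact hyq (hT'q hyT')

lemma quad (hB : IsMaxIndep (graphPower G k) B) {x y : V} (hadj : G.Adj x y)
    (hprop : ∀ T', IsMaxIndep G T' → (x ∈ T' ↔ y ∉ T'))
    {p q : Fin k} (hpq : p.val + q.val + 2 = k + 1) (hple : p.val ≤ q.val) :
    (if x ∈ layer B p then 1 else 0) + (if y ∈ layer B p then 1 else 0)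
      + (if x ∈ layer B q then 1 else 0) + (if y ∈ layer B q then 1 else 0) = 2 := by
  have hApind : IsIndep G (layer B p) := layer_self_indep hB (by omega)
  obtain ⟨T, hT, hTp⟩ := exists_maxIndep_superset G hApind
  have hTq : T ⊆ layer B q := layer_sand hB hpq hT hTp
  have hpropsym : ∀ T', IsMaxIndep G T' → (y ∈ T' ↔ x ∉ T') := by
    intro T' hT'
    have h := hprop T' hT'
    constructor
    · intro hy hx
      exact (h.1 hx) hy
    · intro hx
      by_contra hy
      exact hx (h.2 hy)
  have hc : ¬(x ∈ layer B p ∧ y ∈ layer B q) := by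
    rintro ⟨h1, h2⟩
    exact layer_indep hB (by omega) x h1 y h2 hadj
  have hc' : ¬(y ∈ layer B p ∧ x ∈ layer B q) := by
    rintro ⟨h1, h2⟩
    exact layer_indep hB (by omega) y h1 x h2 hadj.symm
  by_cases hx : x ∈ T
  · obtain ⟨hxq, hyp, hor⟩ := oneSide hB hadj hprop hpq hple hT hTp hTq hx
    rcases hor with h | h
    · have hyq : y ∉ layer B q := fun hy => hc ⟨h, hy⟩
      simp [h, hyp, hxq, hyq]
    · have hxp : x ∉ layer B p := fun hx' => hc ⟨hx', h⟩
      simp [hxp, hyp, hxq, h]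
  · have hy : y ∈ T := by
      by_contra hyT
      exact hx ((hprop T hT).2 hyT)
    obtain ⟨hyq, hxp, hor⟩ := oneSide hB hadj.symm hpropsym hpq hple hT hTp hTq hy
    rcases hor with h | h
    · have hxq : x ∉ layer B q := fun hx' => hc' ⟨h, hx'⟩
      simp [h, hxp, hyq, hxq]
    · have hyp : y ∉ layer B p := fun hy' => hc' ⟨hy', h⟩
      simp [hxp, hyp, h, hyq]

lemma pairSum (heven : Even (Fintype.card V))
    (hiso : ∀ v : V, ∃ u, G.Adj v u)
    (hwc : ∀ A : Set V, IsMaxIndep G A → A.ncard = Fintype.card V / 2)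
    (hB : IsMaxIndep (graphPower G k) B) {p q : Fin k}
    (hpq : p.val + q.val + 2 = k + 1) (hple : p.val ≤ q.val) :
    (layer B p).toFinset.card + (layer B q).toFinset.card = Fintype.card V := by
  obtain ⟨m, hmadj, hminvol, hmprop⟩ := exists_pm G heven hiso hwc
  have hquad : ∀ v : V,
      (if v ∈ layer B p then 1 else 0) + (if m v ∈ layer B p then 1 else 0)
        + (if v ∈ layer B q then 1 else 0) + (if m v ∈ layer B q then 1 else 0) = 2 := by
    intro v
    have h := quad hB (hmadj v) (fun T' hT' => hmprop T' hT' v) hpq hple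
    omega
  have hsum : ∑ v : V, ((if v ∈ layer B p then 1 else 0) + (if m v ∈ layer B p then 1 else 0)
      + (if v ∈ layer B q then 1 else 0) + (if m v ∈ layer B q then 1 else 0))
      = 2 * Fintype.card V := by
    rw [Finset.sum_congr rfl (fun v _ => hquad v)]
    simp [Finset.card_univ, Nat.mul_comm]
  have hbij : Function.Bijective m := Function.Involutive.bijective hminvol
  have hre1 : ∑ v : V, (if m v ∈ layer B p then (1:ℕ) else 0)
      = ∑ v : V, (if v ∈ layer B p then 1 else 0) :=
    Function.Bijective.sum_comp hbij (fun u => if u ∈ layer B p then (1:ℕ) else 0)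
  have hre2 : ∑ v : V, (if m v ∈ layer B q then (1:ℕ) else 0)
      = ∑ v : V, (if v ∈ layer B q then 1 else 0) :=
    Function.Bijective.sum_comp hbij (fun u => if u ∈ layer B q then (1:ℕ) else 0)
  have hcount : ∀ X : Set V, ∑ v : V, (if v ∈ X then (1:ℕ) else 0) = X.toFinset.card := by
    intro X
    have hX : X.toFinset = Finset.univ.filter (fun v => v ∈ X) := by ext v; simp
    rw [hX, Finset.card_filter]
  rw [show ∀ a b c d : V → ℕ, ∑ v : V, (a v + b v + c v + d v)
      = (∑ v : V, a v) + (∑ v : V, b v) + (∑ v : V, c v) + (∑ v : V, d v) from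
      fun a b c d => by rw [← Finset.sum_add_distrib, ← Finset.sum_add_distrib,
        ← Finset.sum_add_distrib]] at hsum
  rw [hre1, hre2, hcount, hcount] at hsum
  omega
end Main


theorem stmt2 {V : Type*} [Fintype V] (G : SimpleGraph V)
    (heven : Even (Fintype.card V))
    (hiso : ∀ v : V, ∃ u, G.Adj v u)
    (hwc : ∀ A : Set V, IsMaxIndep G A → A.ncard = Fintype.card V / 2)
    (k : ℕ) (hk : 1 ≤ k) :
    ∀ B : Set (V × Fin k), IsMaxIndep (graphPower G k) B →
      B.ncard = Fintype.card V * k / 2 := by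
  intro B hB
  set n := Fintype.card V with hn
  set rev : Fin k → Fin k := fun p => ⟨k - 1 - p.val, by omega⟩ with hrevdef
  have hrevval : ∀ p : Fin k, (rev p).val = k - 1 - p.val := fun p => rfl
  have mainCount : ∀ p : Fin k,
      (layer B p).toFinset.card + (layer B (rev p)).toFinset.card = n := by
    intro p
    have hplt : p.val < k := p.isLt
    rcases le_total p.val (rev p).val with h | h
    · exact pairSum heven hiso hwc hB
        (by rw [hrevval]; omega) h
    · have h2 := pairSum heven hiso hwc hB (p := rev p) (q := p)
        (by rw [hrevval]; omega) h
      omega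
  have hlayercard : ∀ p : Fin k,
      (B.toFinset.filter (fun x => x.2 = p)).card = (layer B p).toFinset.card := by
    intro p
    apply Finset.card_bij (fun a _ => a.1)
    · intro a ha
      rw [Finset.mem_filter, Set.mem_toFinset] at ha
      rw [Set.mem_toFinset]
      have heq : (a.1, p) = a := by
        rw [← ha.2]
      show (a.1, p) ∈ B
      rw [heq]
      exact ha.1
    · intro a ha b hb hab
      rw [Finset.mem_filter] at ha hb
      exact Prod.ext hab (by rw [ha.2, hb.2])
    · intro v hv
      rw [Set.mem_toFinset] at hv
      refine ⟨(v, p), ?_, rfl⟩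
      rw [Finset.mem_filter, Set.mem_toFinset]
      exact ⟨hv, rfl⟩
  have hfib : B.toFinset.card = ∑ p : Fin k, (layer B p).toFinset.card := by
    rw [Finset.card_eq_sum_card_fiberwise
      (f := fun x : V × Fin k => x.2) (t := Finset.univ) (fun x _ => Finset.mem_univ _)]
    exact Finset.sum_congr rfl (fun p _ => hlayercard p)
  have hrevinvol : ∀ p : Fin k, rev (rev p) = p := by
    intro p
    have := p.isLt
    apply Fin.ext
    rw [hrevval, hrevval]
    omega
  have hrevbij : Function.Bijective rev := Function.Involutive.bijective hrevinvol
  have hsum2 : ∑ p : Fin k, (layer B (rev p)).toFinset.card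
      = ∑ p : Fin k, (layer B p).toFinset.card :=
    Function.Bijective.sum_comp hrevbij (fun p => (layer B p).toFinset.card)
  have htotal : ∑ p : Fin k, ((layer B p).toFinset.card + (layer B (rev p)).toFinset.card)
      = k * n := by
    rw [Finset.sum_congr rfl (fun p _ => mainCount p)]
    simp [Finset.card_univ, Fintype.card_fin]
  rw [Finset.sum_add_distrib, hsum2] at htotal
  have hcomm : n * k = k * n := Nat.mul_comm n k
  have hkey : n * k = B.ncard * 2 := by
    rw [Set.ncard_eq_toFinset_card' B]
    omega
  omega
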